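/- (Spectral representation of the bivariate Hüsler–Reiss distribution.) For every λ ∈ (0,∞) and all x, y ∈ ℝ, Φ(λ + (x−y)/(2λ)) e^{−y} + Φ(λ + (y−x)/(2λ)) e^{−x} = ∫_0^{π/2} max{ e^{−x} sin θ, e^{−y} cos θ } · [ φ(λ + log(tan θ)/(2λ)) / (2λ sin θ cos²θ) ] dθ. -/

import Mathlib

open MeasureTheory Filter Real Set

/-- Standard normal density. -/
noncomputable def stdPdf (t : ℝ) : ℝ := (Real.sqrt (2 * Real.pi))⁻¹ * Real.exp (-(t ^ 2) / 2)

/-- Standard normal CDF. -/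
noncomputable def stdCdf (x : ℝ) : ℝ := ∫ t in Set.Iic x, stdPdf t

lemma stdPdf_nonneg (t : ℝ) : 0 ≤ stdPdf t := by
  unfold stdPdf
  positivity

lemma integrable_stdPdf : Integrable stdPdf := by
  have h : Integrable (fun t : ℝ => Real.exp (-(1/2 : ℝ) * t ^ 2)) :=
    integrable_exp_neg_mul_sq (by norm_num)
  have h2 := h.const_mul (Real.sqrt (2 * Real.pi))⁻¹
  convert h2 using 2 with t
  unfold stdPdf
  ring_nf

lemma stdPdf_neg (t : ℝ) : stdPdf (-t) = stdPdf t := by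
  unfold stdPdf
  rw [neg_pow]
  norm_num

lemma stdPdf_shift (l t : ℝ) : Real.exp (2*l*t - 2*l^2) * stdPdf t = stdPdf (t - 2*l) := by
  unfold stdPdf
  rw [← mul_assoc, mul_comm (Real.exp _), mul_assoc, ← Real.exp_add]
  congr 1
  ring

lemma shift_Ioi (f : ℝ → ℝ) (c a : ℝ) :
    ∫ t in Ioi c, f (t - a) = ∫ t in Ioi (c - a), f t := by
  rw [← integral_indicator measurableSet_Ioi, ← integral_indicator measurableSet_Ioi]
  rw [← integral_sub_right_eq_self (fun t => (Ioi (c - a)).indicator f t) a]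
  congr 1
  ext t
  by_cases h : c < t
  · simp [indicator, mem_Ioi, h, sub_lt_sub_iff_right, Set.indicator_apply]
  · simp [indicator, mem_Ioi, h, sub_lt_sub_iff_right, Set.indicator_apply]

lemma integral_Ioi_stdPdf_shift (c a : ℝ) :
    ∫ t in Ioi c, stdPdf (t - a) = stdCdf (a - c) := by
  rw [shift_Ioi]
  unfold stdCdf
  rw [show c - a = -(a - c) by ring, ← integral_comp_neg_Iic]
  simp only [stdPdf_neg]


lemma hr_subst (l : ℝ) (hl : 0 < l) (x y : ℝ) :
    (∫ θ in Set.Ioo (0 : ℝ) (Real.pi / 2),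
        max (Real.exp (-x) * Real.sin θ) (Real.exp (-y) * Real.cos θ)
          * (stdPdf (l + Real.log (Real.tan θ) / (2 * l))
              / (2 * l * Real.sin θ * Real.cos θ ^ 2)))
    = ∫ t, max (Real.exp (2*l*t - 2*l^2 - x)) (Real.exp (-y)) * stdPdf t := by
  have hl2 : (2 * l) ≠ 0 := by positivity
  set g : ℝ → ℝ := fun θ => l + Real.log (Real.tan θ) / (2 * l) with hg
  set F : ℝ → ℝ := fun t => max (Real.exp (2*l*t - 2*l^2 - x)) (Real.exp (-y)) * stdPdf t
    with hF
  have hsin : ∀ θ ∈ Ioo (0:ℝ) (Real.pi/2), 0 < Real.sin θ := fun θ hθ =>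
    Real.sin_pos_of_pos_of_lt_pi hθ.1 (lt_trans hθ.2 (by linarith [Real.pi_pos]))
  have hcos : ∀ θ ∈ Ioo (0:ℝ) (Real.pi/2), 0 < Real.cos θ := fun θ hθ =>
    Real.cos_pos_of_mem_Ioo ⟨by linarith [hθ.1, Real.pi_pos], hθ.2⟩
  have htan : ∀ θ ∈ Ioo (0:ℝ) (Real.pi/2), 0 < Real.tan θ := fun θ hθ => by
    rw [Real.tan_eq_sin_div_cos]; exact div_pos (hsin θ hθ) (hcos θ hθ)
  have himg : g '' Ioo (0:ℝ) (Real.pi/2) = univ := by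
    ext t
    simp only [mem_image, mem_univ, iff_true]
    refine ⟨Real.arctan (Real.exp (2*l*(t - l))), ⟨?_, Real.arctan_lt_pi_div_two _⟩, ?_⟩
    · have h := Real.arctan_strictMono (Real.exp_pos (2*l*(t - l)))
      simpa [Real.arctan_zero] using h
    · simp only [hg, Real.tan_arctan, Real.log_exp]
      field_simp
      ring
  have hinj : InjOn g (Ioo (0:ℝ) (Real.pi/2)) := by
    intro a ha b hb hab
    have hta := htan a ha
    have htb := htan b hb
    have hlog : Real.log (Real.tan a) = Real.log (Real.tan b) := by
      have := congrArg (fun r => (r - l) * (2*l)) hab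
      simpa [hg, sub_mul, div_mul_cancel₀ _ hl2] using this
    have htanab : Real.tan a = Real.tan b := by
      rw [← Real.exp_log hta, ← Real.exp_log htb, hlog]
    exact Real.injOn_tan ⟨by linarith [ha.1, Real.pi_pos], ha.2⟩
      ⟨by linarith [hb.1, Real.pi_pos], hb.2⟩ htanab
  have hderiv : ∀ θ ∈ Ioo (0:ℝ) (Real.pi/2),
      HasDerivWithinAt g (1 / (2 * l * Real.sin θ * Real.cos θ))
        (Ioo (0:ℝ) (Real.pi/2)) θ := by
    intro θ hθ
    have hc := hcos θ hθ
    have hs := hsin θ hθ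
    have ht := htan θ hθ
    have h2 : HasDerivAt (fun θ => Real.log (Real.tan θ))
        ((1 / Real.cos θ ^ 2) / Real.tan θ) θ :=
      (Real.hasDerivAt_tan hc.ne').log ht.ne'
    have h3 := (h2.div_const (2*l)).const_add l
    have heq : (1 / Real.cos θ ^ 2) / Real.tan θ / (2*l)
        = 1 / (2 * l * Real.sin θ * Real.cos θ) := by
      rw [Real.tan_eq_sin_div_cos]
      field_simp
    rw [← heq]
    exact h3.hasDerivWithinAt
  conv_rhs => rw [← setIntegral_univ, ← himg,
    integral_image_eq_integral_abs_deriv_smul measurableSet_Ioo hderiv hinj F]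
  refine setIntegral_congr_fun measurableSet_Ioo fun θ hθ => ?_
  have hc := hcos θ hθ
  have hs := hsin θ hθ
  have ht := htan θ hθ
  have hexp : Real.exp (2*l*(g θ) - 2*l^2 - x) = Real.tan θ * Real.exp (-x) := by
    have harg : 2*l*(g θ) - 2*l^2 - x = Real.log (Real.tan θ) + (-x) := by
      simp only [hg]
      field_simp
      ring
    rw [harg, Real.exp_add, Real.exp_log ht]
  have hM : max (Real.tan θ * Real.exp (-x)) (Real.exp (-y))
      = max (Real.exp (-x) * Real.sin θ) (Real.exp (-y) * Real.cos θ) / Real.cos θ := by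
    rw [eq_div_iff hc.ne', max_mul_of_nonneg _ _ hc.le]
    congr 1
    · rw [Real.tan_eq_sin_div_cos]
      field_simp
  have habs : |1 / (2 * l * Real.sin θ * Real.cos θ)| = 1 / (2 * l * Real.sin θ * Real.cos θ) :=
    abs_of_pos (by positivity)
  rw [smul_eq_mul, habs, hF]
  simp only []
  rw [hexp, hM]
  simp only [hg]
  generalize stdPdf (l + Real.log (Real.tan θ) / (2 * l)) = P
  field_simp

lemma max_eval_le (l x y t : ℝ) (hl : 0 < l) (ht : t ≤ l + (x - y) / (2 * l)) :
    max (Real.exp (2*l*t - 2*l^2 - x)) (Real.exp (-y)) = Real.exp (-y) := by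
  have hc_eq : 2*l*(l + (x - y) / (2*l)) = 2*l^2 + (x - y) := by
    field_simp
  have h2 : 2*l*t ≤ 2*l*(l + (x - y) / (2*l)) :=
    mul_le_mul_of_nonneg_left ht (by positivity)
  exact max_eq_right (Real.exp_le_exp.mpr (by nlinarith))

lemma max_eval_ge (l x y t : ℝ) (hl : 0 < l) (ht : l + (x - y) / (2 * l) ≤ t) :
    max (Real.exp (2*l*t - 2*l^2 - x)) (Real.exp (-y)) = Real.exp (2*l*t - 2*l^2 - x) := by
  have hc_eq : 2*l*(l + (x - y) / (2*l)) = 2*l^2 + (x - y) := by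
    field_simp
  have h2 : 2*l*(l + (x - y) / (2*l)) ≤ 2*l*t :=
    mul_le_mul_of_nonneg_left ht (by positivity)
  exact max_eq_left (Real.exp_le_exp.mpr (by nlinarith))

/-- **Spectral representation of the bivariate Hüsler–Reiss distribution.** -/
theorem stmt16 (l : ℝ) (hl : 0 < l) (x y : ℝ) :
    stdCdf (l + (x - y) / (2 * l)) * Real.exp (-y)
        + stdCdf (l + (y - x) / (2 * l)) * Real.exp (-x)
      = ∫ θ in Set.Ioo (0 : ℝ) (Real.pi / 2),
          max (Real.exp (-x) * Real.sin θ) (Real.exp (-y) * Real.cos θ)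
            * (stdPdf (l + Real.log (Real.tan θ) / (2 * l))
                / (2 * l * Real.sin θ * Real.cos θ ^ 2)) := by
  rw [hr_subst l hl x y]
  set c := l + (x - y) / (2 * l) with hc
  have hptB : ∀ t : ℝ, Real.exp (2*l*t - 2*l^2 - x) * stdPdf t
      = Real.exp (-x) * stdPdf (t - 2*l) := by
    intro t
    rw [← stdPdf_shift l t, ← mul_assoc, ← Real.exp_add]
    ring_nf
  have hInt1 : Integrable (fun t => Real.exp (-y) * stdPdf t) :=
    integrable_stdPdf.const_mul _
  have hInt2 : Integrable (fun t => Real.exp (2*l*t - 2*l^2 - x) * stdPdf t) := by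
    simp only [hptB]
    exact (integrable_stdPdf.comp_sub_right (2*l)).const_mul _
  have hIntF : Integrable
      (fun t => max (Real.exp (2*l*t - 2*l^2 - x)) (Real.exp (-y)) * stdPdf t) := by
    have heq : (fun t => max (Real.exp (2*l*t - 2*l^2 - x)) (Real.exp (-y)) * stdPdf t)
        = fun t => (Real.exp (2*l*t - 2*l^2 - x) * stdPdf t) ⊔ (Real.exp (-y) * stdPdf t) := by
      funext t
      rw [max_mul_of_nonneg _ _ (stdPdf_nonneg t)]
    rw [heq]
    exact hInt2.sup hInt1
  rw [← intervalIntegral.integral_Iic_add_Ioi (b := c) hIntF.integrableOn hIntF.integrableOn]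
  have hA : ∫ t in Iic c, max (Real.exp (2*l*t - 2*l^2 - x)) (Real.exp (-y)) * stdPdf t
      = stdCdf c * Real.exp (-y) := by
    rw [setIntegral_congr_fun measurableSet_Iic
      (fun t ht => by rw [max_eval_le l x y t hl ht])]
    rw [integral_const_mul]
    unfold stdCdf
    ring
  have hB : ∫ t in Ioi c, max (Real.exp (2*l*t - 2*l^2 - x)) (Real.exp (-y)) * stdPdf t
      = stdCdf (l + (y - x) / (2 * l)) * Real.exp (-x) := by
    rw [setIntegral_congr_fun measurableSet_Ioi
      (fun t ht => by rw [max_eval_ge l x y t hl (le_of_lt ht), hptB t])]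
    rw [integral_const_mul, integral_Ioi_stdPdf_shift]
    have : 2*l - c = l + (y - x) / (2 * l) := by
      rw [hc]
      field_simp
      ring
    rw [this]
    ring
  rw [hA, hB]
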